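/- Let X ⊆ ℝ^d be a nonempty convex compact set of diameter at most D (i.e., ‖x − y‖₂ ≤ D for all x, y ∈ X), let H > 0, L ≥ 0, and let f_1, …, f_T : ℝ^d → ℝ be functions that are each H-strongly convex on X (f_t(λx + (1−λ)y) ≤ λf_t(x) + (1−λ)f_t(y) − (H/2)λ(1−λ)‖x − y‖₂² for x, y ∈ X, λ ∈ [0,1]) and L-Lipschitz on X (|f_t(x) − f_t(y)| ≤ L‖x − y‖₂ for x, y ∈ X). Let T ≥ 2, let x_1 ∈ X be arbitrary, and for each 1 ≤ t ≤ T−1 let x_{t+1} ∈ X satisfy Σ_{τ=1}^t f_τ(x_{t+1}) ≤ Σ_{τ=1}^t f_τ(x) for all x ∈ X (Follow The Leader iterates). Then Σ_{t=1}^T f_t(x_t) − min_{x ∈ X} Σ_{t=1}^T f_t(x) ≤ 2(L + HD)² ln(T) / H. -/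

import Mathlib

/-- At a minimizer of a σ-strongly convex function, the gap grows quadratically. -/
lemma minGap16 {E : Type*} [NormedAddCommGroup E] [NormedSpace ℝ E]
    (X : Set E) (hXconv : Convex ℝ X) (g : E → ℝ) (σ : ℝ)
    (hsc : ∀ x ∈ X, ∀ y ∈ X, ∀ l ∈ Set.Icc (0:ℝ) 1,
      g (l • x + (1 - l) • y) ≤ l * g x + (1 - l) * g y - σ / 2 * l * (1 - l) * ‖x - y‖ ^ 2)
    (v : E) (hv : v ∈ X) (hmin : ∀ y ∈ X, g v ≤ g y)
    (u : E) (hu : u ∈ X) :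
    σ / 2 * ‖u - v‖ ^ 2 ≤ g u - g v := by
  have key : ∀ l ∈ Set.Ioc (0:ℝ) 1, σ / 2 * (1 - l) * ‖u - v‖ ^ 2 ≤ g u - g v := by
    intro l hl
    have hl0 := hl.1
    have hmem : l • u + (1 - l) • v ∈ X :=
      hXconv hu hv (le_of_lt hl0) (by linarith [hl.2]) (by ring)
    have h1 := hsc u hu v hv l ⟨le_of_lt hl0, hl.2⟩
    have h2 := hmin _ hmem
    have h4 : l * (σ / 2 * (1 - l) * ‖u - v‖ ^ 2) ≤ l * (g u - g v) := by nlinarith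
    exact le_of_mul_le_mul_left h4 hl0
  have hlim : Filter.Tendsto (fun l : ℝ => σ / 2 * (1 - l) * ‖u - v‖ ^ 2)
      (nhdsWithin 0 (Set.Ioi 0)) (nhds (σ / 2 * ‖u - v‖ ^ 2)) := by
    have hc : Continuous fun l : ℝ => σ / 2 * (1 - l) * ‖u - v‖ ^ 2 := by continuity
    have := (hc.tendsto 0).mono_left (nhdsWithin_le_nhds (s := Set.Ioi (0:ℝ)))
    simpa using this
  refine le_of_tendsto hlim ?_
  filter_upwards [Ioc_mem_nhdsGT_of_mem (by norm_num : (0:ℝ) ∈ Set.Ico 0 1)] with l hl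
  exact key l hl

lemma harm16 : ∀ n : ℕ, ∑ t ∈ Finset.Icc 2 n, ((t:ℝ))⁻¹ ≤ Real.log n := by
  intro n
  induction n with
  | zero => simp
  | succ m ih =>
    rcases Nat.lt_or_ge m 1 with hm | hm
    · interval_cases m <;> simp
    · rw [Finset.sum_Icc_succ_top (by omega : 2 ≤ m + 1)]
      have hm1 : (1:ℝ) ≤ (m:ℝ) := by exact_mod_cast hm
      have hx : (0:ℝ) < (m:ℝ) / ((m:ℝ)+1) := by positivity
      have h1 := Real.log_le_sub_one_of_pos hx
      have h2 : Real.log ((m:ℝ) / ((m:ℝ)+1)) = Real.log m - Real.log ((m:ℝ)+1) := by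
        rw [Real.log_div (by linarith) (by linarith)]
      have h3 : (m:ℝ) / ((m:ℝ)+1) - 1 = -((m:ℝ)+1)⁻¹ := by field_simp; ring
      have h4 : ((m:ℝ)+1)⁻¹ ≤ Real.log ((m:ℝ)+1) - Real.log m := by
        rw [h2, h3] at h1; linarith
      push_cast
      linarith [ih]

/-- Regret bound for Follow The Leader on strongly convex Lipschitz losses:
if each `f_t` (for `t = 1, …, T`) is `H`-strongly convex and `L`-Lipschitz on a convex
compact set `X` of diameter at most `D`, and `x_{t+1}` minimizes `Σ_{τ≤t} f_τ` over `X`,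
then the regret is at most `2(L + HD)² ln(T) / H`. -/
theorem stmt16 {d : ℕ} (X : Set (EuclideanSpace ℝ (Fin d)))
    (hXne : X.Nonempty) (hXconv : Convex ℝ X) (hXc : IsCompact X)
    (D : ℝ) (hD : ∀ x ∈ X, ∀ y ∈ X, ‖x - y‖ ≤ D)
    (H L : ℝ) (hH : 0 < H) (hL : 0 ≤ L)
    (T : ℕ) (hT : 2 ≤ T)
    (f : ℕ → EuclideanSpace ℝ (Fin d) → ℝ)
    (hsc : ∀ t ∈ Finset.Icc 1 T, ∀ x ∈ X, ∀ y ∈ X, ∀ l ∈ Set.Icc (0:ℝ) 1,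
      f t (l • x + (1 - l) • y)
        ≤ l * f t x + (1 - l) * f t y - H / 2 * l * (1 - l) * ‖x - y‖ ^ 2)
    (hlip : ∀ t ∈ Finset.Icc 1 T, ∀ x ∈ X, ∀ y ∈ X, |f t x - f t y| ≤ L * ‖x - y‖)
    (xs : ℕ → EuclideanSpace ℝ (Fin d)) (hxs : ∀ t ∈ Finset.Icc 1 T, xs t ∈ X)
    (hftl : ∀ t : ℕ, 1 ≤ t → t ≤ T - 1 →
      ∀ y ∈ X, ∑ τ ∈ Finset.Icc 1 t, f τ (xs (t + 1)) ≤ ∑ τ ∈ Finset.Icc 1 t, f τ y) :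
    (∑ t ∈ Finset.Icc 1 T, f t (xs t))
        - sInf ((fun y => ∑ t ∈ Finset.Icc 1 T, f t y) '' X)
      ≤ 2 * (L + H * D) ^ 2 * Real.log T / H := by
  -- D ≥ 0
  obtain ⟨x0, hx0⟩ := hXne
  have hD0 : 0 ≤ D := le_trans (by simp) (hD x0 hx0 x0 hx0)
  -- continuity of the total loss, minimizer w of F_T
  have hcont : ContinuousOn (fun y => ∑ τ ∈ Finset.Icc 1 T, f τ y) X := by
    apply continuousOn_finset_sum
    intro τ hτ
    have hlw : LipschitzOnWith (Real.toNNReal L) (f τ) X := by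
      apply LipschitzOnWith.of_dist_le_mul
      intro x hx y hy
      rw [Real.dist_eq, dist_eq_norm, Real.coe_toNNReal L hL]
      exact hlip τ hτ x hx y hy
    exact hlw.continuousOn
  obtain ⟨w, hw, hwmin'⟩ := hXc.exists_isMinOn ⟨x0, hx0⟩ hcont
  have hwmin : ∀ y ∈ X, ∑ τ ∈ Finset.Icc 1 T, f τ w ≤ ∑ τ ∈ Finset.Icc 1 T, f τ y :=
    fun y hy => hwmin' hy
  -- the sequence including the virtual point x_{T+1}
  set ys : ℕ → EuclideanSpace ℝ (Fin d) := fun t => if t ≤ T then xs t else w with hys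
  have hysX : ∀ t, 1 ≤ t → ys t ∈ X := by
    intro t ht
    by_cases h : t ≤ T
    · simp only [hys, h, if_pos]; exact hxs t (Finset.mem_Icc.mpr ⟨ht, h⟩)
    · simp only [hys, h, if_neg, if_false]; exact hw
  have hyseq : ∀ t, 1 ≤ t → t ≤ T → ys t = xs t := by
    intro t h1 h2; simp [hys, h2]
  -- minimizer property of ys (t+1) for F_t, 1 ≤ t ≤ T
  have hminF : ∀ t, 1 ≤ t → t ≤ T → ∀ y ∈ X,
      ∑ τ ∈ Finset.Icc 1 t, f τ (ys (t+1)) ≤ ∑ τ ∈ Finset.Icc 1 t, f τ y := by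
    intro t h1 h2 y hy
    rcases eq_or_lt_of_le h2 with rfl | hlt
    · have : ys (t+1) = w := by simp [hys]
      rw [this]; exact hwmin y hy
    · have h3 : ys (t+1) = xs (t+1) := hyseq (t+1) (by omega) (by omega)
      rw [h3]; exact hftl t h1 (by omega) y hy
  -- Be-The-Leader lemma
  have btl : ∀ n, n ≤ T → ∑ t ∈ Finset.Icc 1 n, f t (ys (t+1))
      ≤ ∑ t ∈ Finset.Icc 1 n, f t (ys (n+1)) := by
    intro n
    induction n with
    | zero => simp
    | succ m ih =>
      intro hmT
      rw [Finset.sum_Icc_succ_top (by omega : 1 ≤ m + 1),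
        Finset.sum_Icc_succ_top (by omega : 1 ≤ m + 1)]
      have h1 := ih (by omega)
      rcases Nat.eq_zero_or_pos m with h0 | hpos
      · subst h0; simp
      · have h2 := hminF m hpos (by omega) (ys (m+1+1)) (hysX (m+1+1) (by omega))
        linarith
  -- lower bound on sInf
  have hinf : ∑ t ∈ Finset.Icc 1 T, f t (ys (t+1))
      ≤ sInf ((fun y => ∑ t ∈ Finset.Icc 1 T, f t y) '' X) := by
    apply le_csInf (Set.Nonempty.image _ ⟨x0, hx0⟩)
    rintro b ⟨y, hy, rfl⟩
    exact (btl T le_rfl).trans (hminF T (by omega) le_rfl y hy)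
  -- strong convexity of F_n with modulus n*H
  have hscF : ∀ n, 1 ≤ n → n ≤ T → ∀ x ∈ X, ∀ y ∈ X, ∀ l ∈ Set.Icc (0:ℝ) 1,
      (∑ τ ∈ Finset.Icc 1 n, f τ (l • x + (1 - l) • y))
        ≤ l * (∑ τ ∈ Finset.Icc 1 n, f τ x) + (1 - l) * (∑ τ ∈ Finset.Icc 1 n, f τ y)
          - ((n:ℝ) * H) / 2 * l * (1 - l) * ‖x - y‖ ^ 2 := by
    intro n h1 h2 x hx y hy l hl
    have hsum := Finset.sum_le_sum (s := Finset.Icc 1 n)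
      (f := fun τ => f τ (l • x + (1 - l) • y))
      (g := fun τ => l * f τ x + (1 - l) * f τ y - H / 2 * l * (1 - l) * ‖x - y‖ ^ 2)
      (fun τ hτ => by
        have hτ' : τ ∈ Finset.Icc 1 T := by
          simp only [Finset.mem_Icc] at hτ ⊢; omega
        exact hsc τ hτ' x hx y hy l hl)
    have hcard : (Finset.Icc 1 n).card = n := by rw [Nat.card_Icc]; omega
    rw [Finset.sum_sub_distrib, Finset.sum_add_distrib, ← Finset.mul_sum, ← Finset.mul_sum,
      Finset.sum_const, hcard, nsmul_eq_mul] at hsum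
    calc (∑ τ ∈ Finset.Icc 1 n, f τ (l • x + (1 - l) • y))
        ≤ l * (∑ τ ∈ Finset.Icc 1 n, f τ x) + (1 - l) * (∑ τ ∈ Finset.Icc 1 n, f τ y)
          - (n:ℝ) * (H / 2 * l * (1 - l) * ‖x - y‖ ^ 2) := hsum
      _ = _ := by ring
  -- per-step bound for t ≥ 2
  have hterm : ∀ t, 2 ≤ t → t ≤ T →
      f t (ys t) - f t (ys (t+1)) ≤ 2 * L^2 / ((t:ℝ) * H) := by
    intro t h2 hTt
    have ht0 : (0:ℝ) < (t:ℝ) := by positivity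
    have ht2 : (2:ℝ) ≤ (t:ℝ) := by exact_mod_cast h2
    have hu : ys t ∈ X := hysX t (by omega)
    have hv : ys (t+1) ∈ X := hysX (t+1) (by omega)
    -- ys t minimizes F (t-1)
    have humin : ∀ y ∈ X, ∑ τ ∈ Finset.Icc 1 (t-1), f τ (ys t) ≤ ∑ τ ∈ Finset.Icc 1 (t-1), f τ y := by
      intro y hy
      have := hminF (t-1) (by omega) (by omega) y hy
      rwa [show t - 1 + 1 = t by omega] at this
    -- ys (t+1) minimizes F t
    have hvmin := hminF t (by omega) hTt
    -- strong convexity gap at the minimizer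
    have hgap := minGap16 X hXconv (fun y => ∑ τ ∈ Finset.Icc 1 t, f τ y) ((t:ℝ) * H)
      (fun x hx y hy l hl => hscF t (by omega) hTt x hx y hy l hl)
      (ys (t+1)) hv hvmin (ys t) hu
    -- split F t = F (t-1) + f t
    have hsplit : ∀ z, ∑ τ ∈ Finset.Icc 1 t, f τ z
        = (∑ τ ∈ Finset.Icc 1 (t-1), f τ z) + f t z := by
      intro z
      have := Finset.sum_Icc_succ_top (by omega : 1 ≤ (t-1) + 1) (fun τ => f τ z)
      rwa [show t - 1 + 1 = t by omega] at this
    have hG := humin (ys (t+1)) hv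
    have hkey : (t:ℝ) * H / 2 * ‖ys t - ys (t+1)‖ ^ 2 ≤ f t (ys t) - f t (ys (t+1)) := by
      have h5 : (t:ℝ) * H / 2 * ‖ys t - ys (t+1)‖ ^ 2
          ≤ (∑ τ ∈ Finset.Icc 1 t, f τ (ys t)) - ∑ τ ∈ Finset.Icc 1 t, f τ (ys (t+1)) := hgap
      rw [hsplit (ys t), hsplit (ys (t+1))] at h5
      linarith
    have hlipb : f t (ys t) - f t (ys (t+1)) ≤ L * ‖ys t - ys (t+1)‖ :=
      le_trans (le_abs_self _) (hlip t (Finset.mem_Icc.mpr ⟨by omega, hTt⟩) _ hu _ hv)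
    set r : ℝ := ‖ys t - ys (t+1)‖ with hr
    have hr0 : 0 ≤ r := norm_nonneg _
    rcases eq_or_lt_of_le hr0 with hre | hrp
    · have : f t (ys t) - f t (ys (t+1)) ≤ 0 := by rw [← hre] at hlipb; simpa using hlipb
      have : (0:ℝ) ≤ 2 * L^2 / ((t:ℝ) * H) := by positivity
      linarith
    · have hrb : r ≤ 2 * L / ((t:ℝ) * H) := by
        rw [le_div_iff₀ (by positivity)]
        nlinarith
      calc f t (ys t) - f t (ys (t+1)) ≤ L * r := hlipb
        _ ≤ L * (2 * L / ((t:ℝ) * H)) := by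
            exact mul_le_mul_of_nonneg_left hrb hL
        _ = 2 * L^2 / ((t:ℝ) * H) := by ring
  -- first term bound
  have hterm1 : f 1 (ys 1) - f 1 (ys 2) ≤ L * D := by
    have hu : ys 1 ∈ X := hysX 1 le_rfl
    have hv : ys 2 ∈ X := hysX 2 (by omega)
    calc f 1 (ys 1) - f 1 (ys 2) ≤ L * ‖ys 1 - ys 2‖ :=
          le_trans (le_abs_self _) (hlip 1 (Finset.mem_Icc.mpr ⟨le_rfl, by omega⟩) _ hu _ hv)
      _ ≤ L * D := mul_le_mul_of_nonneg_left (hD _ hu _ hv) hL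
  -- rewrite the played sum with ys
  have hrw : ∑ t ∈ Finset.Icc 1 T, f t (xs t) = ∑ t ∈ Finset.Icc 1 T, f t (ys t) := by
    apply Finset.sum_congr rfl
    intro t ht
    rw [hyseq t (Finset.mem_Icc.mp ht).1 (Finset.mem_Icc.mp ht).2]
  -- regret ≤ sum of differences
  have hreg : (∑ t ∈ Finset.Icc 1 T, f t (xs t))
      - sInf ((fun y => ∑ t ∈ Finset.Icc 1 T, f t y) '' X)
      ≤ ∑ t ∈ Finset.Icc 1 T, (f t (ys t) - f t (ys (t+1))) := by
    rw [hrw, Finset.sum_sub_distrib]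
    linarith [hinf]
  -- split off the first term
  have hsplit1 : Finset.Icc 1 T = insert 1 (Finset.Icc 2 T) := by
    ext x; simp only [Finset.mem_Icc, Finset.mem_insert]; omega
  have hsum2 : ∑ t ∈ Finset.Icc 2 T, (f t (ys t) - f t (ys (t+1)))
      ≤ 2 * L^2 / H * Real.log T := by
    calc ∑ t ∈ Finset.Icc 2 T, (f t (ys t) - f t (ys (t+1)))
        ≤ ∑ t ∈ Finset.Icc 2 T, 2 * L^2 / ((t:ℝ) * H) :=
          Finset.sum_le_sum (fun t ht => hterm t (Finset.mem_Icc.mp ht).1 (Finset.mem_Icc.mp ht).2)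
      _ = 2 * L^2 / H * ∑ t ∈ Finset.Icc 2 T, ((t:ℝ))⁻¹ := by
          rw [Finset.mul_sum]
          apply Finset.sum_congr rfl
          intro t ht
          rw [mul_comm (t:ℝ) H, ← div_div, div_eq_mul_inv]
      _ ≤ 2 * L^2 / H * Real.log T := by
          apply mul_le_mul_of_nonneg_left (harm16 T) (by positivity)
  have hlog2 : (1:ℝ)/2 ≤ Real.log T := by
    have h1 : Real.log 2 ≤ Real.log T := by
      apply Real.log_le_log (by norm_num)
      exact_mod_cast hT
    linarith [Real.log_two_gt_d9]
  have hfinal : L * D + 2 * L^2 / H * Real.log T ≤ 2 * (L + H * D) ^ 2 * Real.log T / H := by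
    rw [div_eq_mul_inv, div_eq_mul_inv]
    have hHinv : (0:ℝ) < H⁻¹ := by positivity
    have key : (L * D) * H + 2 * L^2 * Real.log T ≤ 2 * (L + H * D) ^ 2 * Real.log T := by
      nlinarith [mul_nonneg (mul_nonneg hL hD0) hH.le,
        mul_nonneg (mul_nonneg (mul_nonneg hL hD0) hH.le) (by linarith : (0:ℝ) ≤ 4 * Real.log T - 1),
        mul_nonneg (mul_nonneg (sq_nonneg D) (sq_nonneg H)) (by linarith : (0:ℝ) ≤ Real.log T)]
    calc L * D + 2 * L^2 * H⁻¹ * Real.log T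
        = ((L * D) * H + 2 * L^2 * Real.log T) * H⁻¹ := by field_simp
      _ ≤ (2 * (L + H * D) ^ 2 * Real.log T) * H⁻¹ :=
          mul_le_mul_of_nonneg_right key hHinv.le
  calc (∑ t ∈ Finset.Icc 1 T, f t (xs t))
      - sInf ((fun y => ∑ t ∈ Finset.Icc 1 T, f t y) '' X)
      ≤ ∑ t ∈ Finset.Icc 1 T, (f t (ys t) - f t (ys (t+1))) := hreg
    _ = (f 1 (ys 1) - f 1 (ys 2)) + ∑ t ∈ Finset.Icc 2 T, (f t (ys t) - f t (ys (t+1))) := by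
        rw [hsplit1, Finset.sum_insert (by simp)]
    _ ≤ L * D + 2 * L^2 / H * Real.log T := add_le_add hterm1 hsum2
    _ ≤ 2 * (L + H * D) ^ 2 * Real.log T / H := hfinal
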